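/- arXiv:1607.03022 — 7 statements merged into one kernel-verified Lean document; each statement's English description precedes it below -/
import Mathlib

section
/- Let V be a real normed vector space, A a continuous linear operator on V, and a > 0 with ‖exp(tA) v‖ ≤ exp(-a t) ‖v‖ for all t ≥ 0, v ∈ V. Then for every nonzero v ∈ V there exists a unique τ ∈ ℝ such that ‖exp(τ A) v‖ = 1. -/
open NormedSpace

set_option synthInstance.maxHeartbeats 1000000

/-- Under the hyperbolicity estimate, every nonzero vector crosses the unit sphere
at a unique time. -/
theorem stmt1 {V : Type*} [NormedAddCommGroup V] [NormedSpace ℝ V] [CompleteSpace V]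
    (A : V →L[ℝ] V) (a : ℝ) (ha : 0 < a)
    (hyp : ∀ t : ℝ, 0 ≤ t → ∀ v : V, ‖exp (t • A) v‖ ≤ Real.exp (-a * t) * ‖v‖) :
    ∀ v : V, v ≠ 0 → ∃! τ : ℝ, ‖exp (τ • A) v‖ = 1 := by
  intro v hv
  letI : NormedAlgebra ℚ (V →L[ℝ] V) := NormedAlgebra.restrictScalars ℚ ℝ (V →L[ℝ] V)
  set g : ℝ → ℝ := fun t => ‖exp (t • A) v‖ with hg
  -- semigroup property
  have hsplit : ∀ s t : ℝ, exp ((s + t) • A) = exp (t • A) * exp (s • A) := by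
    intro s t
    rw [add_smul, add_comm]
    apply exp_add_of_commute
    show t • A * s • A = s • A * t • A
    rw [smul_mul_assoc, mul_smul_comm, smul_mul_assoc, mul_smul_comm, smul_comm]
  have key : ∀ s t : ℝ, 0 ≤ t → g (s + t) ≤ Real.exp (-a * t) * g s := by
    intro s t ht
    have : exp ((s + t) • A) v = exp (t • A) (exp (s • A) v) := by
      rw [hsplit]; rfl
    simpa [hg, this] using hyp t ht (exp (s • A) v)
  -- positivity
  have gpos : ∀ t : ℝ, 0 < g t := by
    intro t
    rcases eq_or_lt_of_le (norm_nonneg (exp (t • A) v)) with h | h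
    · exfalso
      have hz : exp (t • A) v = 0 := by
        simpa using (norm_eq_zero.mp h.symm)
      have : exp ((t + -t) • A) v = exp (-t • A) (exp (t • A) v) := by
        rw [hsplit]; rfl
      rw [hz] at this
      simp at this
      exact hv this
    · exact h
  -- strict anti
  have hanti : StrictAnti g := by
    intro s u hsu
    have h1 := key s (u - s) (by linarith)
    have h2 : Real.exp (-a * (u - s)) < 1 := by
      rw [Real.exp_lt_one_iff]
      nlinarith
    calc g u = g (s + (u - s)) := by ring_nf
      _ ≤ Real.exp (-a * (u - s)) * g s := h1
      _ < 1 * g s := by exact mul_lt_mul_of_pos_right h2 (gpos s)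
      _ = g s := one_mul _
  -- continuity
  have hcont : Continuous g := by
    have h1 : Continuous fun t : ℝ => exp (t • A) :=
      exp_continuous.comp (continuous_id.smul continuous_const)
    exact (h1.clm_apply continuous_const).norm
  -- bounds
  have hub : ∀ t : ℝ, 0 ≤ t → g t ≤ Real.exp (-a * t) * g 0 := by
    intro t ht
    simpa using key 0 t ht
  have hlb : ∀ t : ℝ, t ≤ 0 → Real.exp (-a * t) * g 0 ≤ g t := by
    intro t ht
    have := key t (-t) (by linarith)
    simp only [add_neg_cancel] at this
    have h2 : Real.exp (-a * t) * g 0 ≤ Real.exp (-a * t) * (Real.exp (-a * -t) * g t) :=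
      mul_le_mul_of_nonneg_left this (Real.exp_nonneg _)
    calc Real.exp (-a * t) * g 0 ≤ Real.exp (-a * t) * (Real.exp (-a * -t) * g t) := h2
      _ = Real.exp (-a * t + -a * -t) * g t := by rw [Real.exp_add]; ring
      _ = g t := by ring_nf; rw [Real.exp_zero, one_mul]
  -- choose endpoints
  set L : ℝ := Real.log (g 0) / a with hL
  have haL : a * L = Real.log (g 0) := by rw [hL]; field_simp
  set t₁ : ℝ := max 0 L with ht₁
  set t₀ : ℝ := min 0 L with ht₀
  have h01 : t₀ ≤ t₁ := le_trans (min_le_left _ _) (le_max_left _ _)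
  have hgt1 : g t₁ ≤ 1 := by
    have := hub t₁ (le_max_left _ _)
    have hle : Real.exp (-a * t₁) * g 0 ≤ 1 := by
      have h1 : a * L ≤ a * t₁ := mul_le_mul_of_nonneg_left (le_max_right _ _) ha.le
      have : Real.exp (-a * t₁) ≤ Real.exp (-Real.log (g 0)) := by
        apply Real.exp_le_exp.mpr; rw [← haL]; linarith
      calc Real.exp (-a * t₁) * g 0 ≤ Real.exp (-Real.log (g 0)) * g 0 :=
            mul_le_mul_of_nonneg_right this (gpos 0).le
        _ = 1 := by
            rw [Real.exp_neg, Real.exp_log (gpos 0)]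
            exact inv_mul_cancel₀ (gpos 0).ne'
    linarith [hub t₁ (le_max_left 0 L)]
  have hgt0 : 1 ≤ g t₀ := by
    have h1 : a * t₀ ≤ a * L := mul_le_mul_of_nonneg_left (min_le_right _ _) ha.le
    have h2 : Real.exp (-Real.log (g 0)) ≤ Real.exp (-a * t₀) := by
      apply Real.exp_le_exp.mpr; rw [← haL]; linarith
    have h3 : (1 : ℝ) ≤ Real.exp (-a * t₀) * g 0 := by
      calc (1:ℝ) = Real.exp (-Real.log (g 0)) * g 0 := by
            rw [Real.exp_neg, Real.exp_log (gpos 0), inv_mul_cancel₀ (gpos 0).ne']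
        _ ≤ Real.exp (-a * t₀) * g 0 := mul_le_mul_of_nonneg_right h2 (gpos 0).le
    linarith [hlb t₀ (min_le_left 0 L)]
  -- intermediate value
  obtain ⟨τ, -, hτ⟩ := intermediate_value_Icc' h01 hcont.continuousOn
    (Set.mem_Icc.mpr ⟨hgt1, hgt0⟩)
  exact ⟨τ, hτ, fun y hy => hanti.injective (show g y = g τ by rw [hτ]; exact hy)⟩
end

section
/- Let V be a real normed vector space and A a hyperbolic continuous linear operator (i.e. ‖exp(tA) v‖ ≤ exp(-a t)‖v‖ for all t ≥ 0 with a > 0). Then the crossing-time function t_A : V \ {0} → ℝ, defined by ‖exp(t_A(v) A) v‖ = 1, is continuous. -/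
open NormedSpace

/-- The crossing-time function `t_A` is continuous on `V \ {0}`. -/
theorem stmt3 {V : Type*} [NormedAddCommGroup V] [NormedSpace ℝ V] [CompleteSpace V]
    (A : V →L[ℝ] V) (a : ℝ) (ha : 0 < a)
    (hyp : ∀ t : ℝ, 0 ≤ t → ∀ v : V, ‖exp (t • A) v‖ ≤ Real.exp (-a * t) * ‖v‖)
    (tA : V → ℝ) (htA : ∀ v : V, v ≠ 0 → ‖exp (tA v • A) v‖ = 1) :
    ContinuousOn tA {v : V | v ≠ 0} := by
  -- monotonicity estimate
  have mono : ∀ (v : V) (s t : ℝ), s ≤ t →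
      ‖exp (t • A) v‖ ≤ Real.exp (-a * (t - s)) * ‖exp (s • A) v‖ := by
    intro v s t hst
    have hc : Commute ((t - s) • A) (s • A) := by
      ext w
      simp only [ContinuousLinearMap.mul_apply, ContinuousLinearMap.coe_smul',
        Pi.smul_apply, map_smul]
      rw [smul_comm]
    have hsplit : exp (t • A) = exp ((t - s) • A) * exp (s • A) := by
      rw [← exp_add_of_commute_of_mem_ball (𝕂 := ℝ) hc
        ((expSeries_radius_eq_top ℝ (V →L[ℝ] V)).symm ▸ edist_lt_top _ _)
        ((expSeries_radius_eq_top ℝ (V →L[ℝ] V)).symm ▸ edist_lt_top _ _), ← add_smul, sub_add_cancel]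
    have : ‖exp (t • A) v‖ = ‖exp ((t - s) • A) (exp (s • A) v)‖ := by
      rw [hsplit]; rfl
    rw [this]
    exact hyp (t - s) (by linarith) _
  have upper : ∀ v : V, v ≠ 0 → ∀ t : ℝ, ‖exp (t • A) v‖ < 1 → tA v < t := by
    intro v hv t h
    by_contra hle
    push_neg at hle
    have h1 := mono v t (tA v) hle
    rw [htA v hv] at h1
    have h2 : Real.exp (-a * (tA v - t)) ≤ 1 := by
      rw [Real.exp_le_one_iff]
      nlinarith
    nlinarith [mul_lt_mul_of_pos_left h (Real.exp_pos (-a * (tA v - t)))]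
  have lower : ∀ v : V, v ≠ 0 → ∀ t : ℝ, 1 < ‖exp (t • A) v‖ → t < tA v := by
    intro v hv t h
    by_contra hle
    push_neg at hle
    have h1 := mono v (tA v) t hle
    rw [htA v hv] at h1
    have h2 : Real.exp (-a * (t - tA v)) ≤ 1 := by
      rw [Real.exp_le_one_iff]
      nlinarith
    nlinarith [Real.exp_pos (-a * (t - tA v))]
  rw [Metric.continuousOn_iff]
  intro v₀ hv₀ ε hε
  simp only [Set.mem_setOf_eq] at hv₀
  set t₀ := tA v₀ with ht₀
  have hexp1 : Real.exp (-a * ε) < 1 := by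
    rw [Real.exp_lt_one_iff]; nlinarith
  have hupper₀ : ‖exp ((t₀ + ε) • A) v₀‖ < 1 := by
    have := mono v₀ t₀ (t₀ + ε) (by linarith)
    rw [htA v₀ hv₀] at this
    simp only [add_sub_cancel_left] at this
    linarith
  have hlower₀ : 1 < ‖exp ((t₀ - ε) • A) v₀‖ := by
    have := mono v₀ (t₀ - ε) t₀ (by linarith)
    rw [htA v₀ hv₀] at this
    have heq : t₀ - (t₀ - ε) = ε := by ring
    rw [heq] at this
    nlinarith [Real.exp_pos (-a * ε), norm_nonneg (exp ((t₀ - ε) • A) v₀)]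
  have hopen : IsOpen {v : V | ‖exp ((t₀ + ε) • A) v‖ < 1 ∧ 1 < ‖exp ((t₀ - ε) • A) v‖} := by
    apply IsOpen.inter
    · exact isOpen_lt ((exp ((t₀ + ε) • A)).continuous.norm) continuous_const
    · exact isOpen_lt continuous_const ((exp ((t₀ - ε) • A)).continuous.norm)
  obtain ⟨δ, hδ, hball⟩ := Metric.isOpen_iff.mp hopen v₀ ⟨hupper₀, hlower₀⟩
  refine ⟨δ, hδ, fun v hv hdist => ?_⟩
  simp only [Set.mem_setOf_eq] at hv
  obtain ⟨h1, h2⟩ := hball (Metric.mem_ball.mpr hdist)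
  have hu := upper v hv (t₀ + ε) h1
  have hl := lower v hv (t₀ - ε) h2
  rw [Real.dist_eq, abs_lt]
  constructor <;> [linarith; linarith]
end

section
/- Let V be a real normed vector space and A, B continuous linear operators such that there exist a, b > 0 with ‖exp(tA) v‖ ≤ exp(-a t)‖v‖ and ‖exp(tB) v‖ ≤ exp(-b t)‖v‖ for all t ≥ 0 and v ∈ V. Then the flows (t, v) ↦ exp(tA) v and (t, v) ↦ exp(tB) v are topologically conjugate: there is a homeomorphism ψ : V → V with ψ(exp(tA) v) = exp(tB) ψ(v) for all t ∈ ℝ, v ∈ V. -/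
open NormedSpace

set_option maxHeartbeats 1000000
set_option synthInstance.maxHeartbeats 400000
set_option linter.unusedSectionVars false
set_option linter.unusedVariables false

section Stmt4Aux
variable {V : Type*} [NormedAddCommGroup V] [NormedSpace ℝ V] [FiniteDimensional ℝ V]

/-- The linear flow of `A`. -/
noncomputable def stmt4fl (A : V →L[ℝ] V) (t : ℝ) (v : V) : V := exp (t • A) v

lemma stmt4fl_add (A : V →L[ℝ] V) (s t : ℝ) (v : V) :
    stmt4fl A (s + t) v = stmt4fl A s (stmt4fl A t v) := by
  unfold stmt4fl
  let +nondep : NormedAlgebra ℚ (V →L[ℝ] V) := .restrictScalars ℚ ℝ _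
  have hc : Commute (s • A) (t • A) := by
    unfold Commute SemiconjBy
    rw [smul_mul_smul_comm, smul_mul_smul_comm, mul_comm s t]
  rw [add_smul, exp_add_of_commute hc, ContinuousLinearMap.mul_apply]

lemma stmt4fl_zero (A : V →L[ℝ] V) (v : V) : stmt4fl A 0 v = v := by
  unfold stmt4fl
  rw [zero_smul, exp_zero, ContinuousLinearMap.one_apply]

lemma stmt4fl_zero' (A : V →L[ℝ] V) (t : ℝ) : stmt4fl A t (0 : V) = 0 := by
  simp [stmt4fl]

lemma stmt4fl_cancel (A : V →L[ℝ] V) (t : ℝ) (v : V) :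
    stmt4fl A (-t) (stmt4fl A t v) = v := by
  rw [← stmt4fl_add, neg_add_cancel, stmt4fl_zero]

lemma stmt4fl_ne_zero (A : V →L[ℝ] V) (t : ℝ) {v : V} (hv : v ≠ 0) :
    stmt4fl A t v ≠ 0 := by
  intro h
  apply hv
  have h2 := stmt4fl_cancel A t v
  rw [h, stmt4fl_zero'] at h2
  exact h2.symm

lemma stmt4fl_continuous (A : V →L[ℝ] V) :
    Continuous fun p : ℝ × V => stmt4fl A p.1 p.2 := by
  have h1 : Continuous fun t : ℝ => exp (t • A) := by
    have h0 : Continuous fun t : ℝ => t • A := continuous_id.smul continuous_const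
    let +nondep : NormedAlgebra ℚ (V →L[ℝ] V) := .restrictScalars ℚ ℝ _
    exact (exp_continuous (𝔸 := V →L[ℝ] V)).comp h0
  have h2 : Continuous fun p : (V →L[ℝ] V) × V => p.1 p.2 :=
    isBoundedBilinearMap_apply.continuous
  exact h2.comp ((h1.comp continuous_fst).prodMk continuous_snd)

lemma stmt4_norm_exp_le (x : V →L[ℝ] V) : ‖exp x‖ ≤ Real.exp ‖x‖ := by
  rw [Real.exp_eq_exp_ℝ, exp_eq_tsum (𝕂 := ℝ), exp_eq_tsum (𝕂 := ℝ)]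
  have hs2 : Summable fun n : ℕ => (n.factorial⁻¹ : ℝ) • ‖x‖ ^ n :=
    expSeries_summable' (𝕂 := ℝ) (‖x‖ : ℝ)
  refine (norm_tsum_le_tsum_norm (norm_expSeries_summable' x)).trans ?_
  refine Summable.tsum_le_tsum (fun n => ?_) (norm_expSeries_summable' x) hs2
  rw [norm_smul, norm_inv, RCLike.norm_natCast, smul_eq_mul]
  have hp : ‖x ^ n‖ ≤ ‖x‖ ^ n := by
    cases n with
    | zero => rw [pow_zero, pow_zero]; exact ContinuousLinearMap.norm_id_le
    | succ m => exact norm_pow_le' x m.succ_pos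
  exact mul_le_mul_of_nonneg_left hp (by positivity)

lemma stmt4fl_norm_le_exp (A : V →L[ℝ] V) (t : ℝ) (v : V) :
    ‖stmt4fl A t v‖ ≤ Real.exp (|t| * ‖A‖) * ‖v‖ := by
  calc ‖stmt4fl A t v‖ ≤ ‖exp (t • A)‖ * ‖v‖ := (exp (t • A)).le_opNorm v
    _ ≤ Real.exp ‖t • A‖ * ‖v‖ :=
        mul_le_mul_of_nonneg_right (stmt4_norm_exp_le _) (norm_nonneg v)
    _ = Real.exp (|t| * ‖A‖) * ‖v‖ := by
        have h : ‖t • A‖ = |t| * ‖A‖ := by exact_mod_cast norm_smul t A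
        rw [h]

variable {A B : V →L[ℝ] V} {a b : ℝ}

lemma stmt4_norm_ge (ha : 0 < a)
    (hA : ∀ t : ℝ, 0 ≤ t → ∀ v : V, ‖stmt4fl A t v‖ ≤ Real.exp (-a * t) * ‖v‖)
    {t : ℝ} (ht : t ≤ 0) (v : V) :
    Real.exp (-a * t) * ‖v‖ ≤ ‖stmt4fl A t v‖ := by
  have h := hA (-t) (by linarith) (stmt4fl A t v)
  rw [stmt4fl_cancel] at h
  have he : Real.exp (-a * t) * Real.exp (-a * -t) = 1 := by
    rw [← Real.exp_add, show -a * t + -a * -t = 0 by ring, Real.exp_zero]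
  calc Real.exp (-a * t) * ‖v‖
      ≤ Real.exp (-a * t) * (Real.exp (-a * -t) * ‖stmt4fl A t v‖) :=
        mul_le_mul_of_nonneg_left h (Real.exp_pos _).le
    _ = ‖stmt4fl A t v‖ := by rw [← mul_assoc, he, one_mul]

lemma stmt4_norm_lt (ha : 0 < a)
    (hA : ∀ t : ℝ, 0 ≤ t → ∀ v : V, ‖stmt4fl A t v‖ ≤ Real.exp (-a * t) * ‖v‖)
    {v : V} (hv : v ≠ 0) {s t : ℝ} (hst : s < t) :
    ‖stmt4fl A t v‖ < ‖stmt4fl A s v‖ := by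
  have h1 : stmt4fl A t v = stmt4fl A (t - s) (stmt4fl A s v) := by
    rw [← stmt4fl_add, sub_add_cancel]
  have h2 := hA (t - s) (by linarith) (stmt4fl A s v)
  have h3 : Real.exp (-a * (t - s)) < 1 := by
    rw [Real.exp_lt_one_iff]; nlinarith
  have h4 : 0 < ‖stmt4fl A s v‖ := norm_pos_iff.mpr (stmt4fl_ne_zero A s hv)
  rw [h1]
  nlinarith

lemma stmt4_norm_le (ha : 0 < a)
    (hA : ∀ t : ℝ, 0 ≤ t → ∀ v : V, ‖stmt4fl A t v‖ ≤ Real.exp (-a * t) * ‖v‖)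
    {v : V} (hv : v ≠ 0) {s t : ℝ} (hst : s ≤ t) :
    ‖stmt4fl A t v‖ ≤ ‖stmt4fl A s v‖ := by
  rcases eq_or_lt_of_le hst with h | h
  · rw [h]
  · exact (stmt4_norm_lt ha hA hv h).le

lemma stmt4_exists_tau (ha : 0 < a)
    (hA : ∀ t : ℝ, 0 ≤ t → ∀ v : V, ‖stmt4fl A t v‖ ≤ Real.exp (-a * t) * ‖v‖)
    {v : V} (hv : v ≠ 0) : ∃ t : ℝ, ‖stmt4fl A t v‖ = 1 := by
  set g : ℝ → ℝ := fun t => ‖stmt4fl A t v‖ with hg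
  have hgc : Continuous g := by
    have := (stmt4fl_continuous A).comp
      (continuous_id.prodMk continuous_const : Continuous fun t : ℝ => (t, v))
    exact this.norm
  have hv0 : (0 : ℝ) < ‖v‖ := norm_pos_iff.mpr hv
  set c : ℝ := Real.log ‖v‖ / a with hc
  have hca : a * c = Real.log ‖v‖ := by have := ha.ne'; rw [hc]; field_simp
  have hup : g (max 0 c) ≤ 1 := by
    have h1 := hA (max 0 c) (le_max_left 0 c) v
    have h2 : Real.exp (-a * max 0 c) ≤ ‖v‖⁻¹ := by
      rw [show ‖v‖⁻¹ = Real.exp (Real.log ‖v‖⁻¹) by rw [Real.exp_log (by positivity)],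
        Real.log_inv, Real.exp_le_exp]
      have := le_max_right 0 c
      nlinarith
    calc g (max 0 c) ≤ Real.exp (-a * max 0 c) * ‖v‖ := h1
      _ ≤ ‖v‖⁻¹ * ‖v‖ := mul_le_mul_of_nonneg_right h2 hv0.le
      _ = 1 := inv_mul_cancel₀ hv0.ne'
  have hlo : 1 ≤ g (min 0 c) := by
    have h1 := stmt4_norm_ge ha hA (min_le_left 0 c) v
    have h2 : ‖v‖⁻¹ ≤ Real.exp (-a * min 0 c) := by
      rw [show ‖v‖⁻¹ = Real.exp (Real.log ‖v‖⁻¹) by rw [Real.exp_log (by positivity)],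
        Real.log_inv, Real.exp_le_exp]
      have := min_le_right 0 c
      nlinarith
    calc (1 : ℝ) = ‖v‖⁻¹ * ‖v‖ := (inv_mul_cancel₀ hv0.ne').symm
      _ ≤ Real.exp (-a * min 0 c) * ‖v‖ := mul_le_mul_of_nonneg_right h2 hv0.le
      _ ≤ g (min 0 c) := h1
  have hsub := intermediate_value_Icc' (le_trans (min_le_left 0 c) (le_max_left 0 c))
    hgc.continuousOn
  obtain ⟨t, -, ht⟩ := hsub ⟨hup, hlo⟩
  exact ⟨t, ht⟩

open Classical in
/-- The time at which the `A`-orbit of `v` crosses the unit sphere. -/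
noncomputable def stmt4tau (A : V →L[ℝ] V) (v : V) : ℝ :=
  if h : ∃ t : ℝ, ‖stmt4fl A t v‖ = 1 then h.choose else 0

lemma stmt4tau_spec (ha : 0 < a)
    (hA : ∀ t : ℝ, 0 ≤ t → ∀ v : V, ‖stmt4fl A t v‖ ≤ Real.exp (-a * t) * ‖v‖)
    {v : V} (hv : v ≠ 0) : ‖stmt4fl A (stmt4tau A v) v‖ = 1 := by
  have h := stmt4_exists_tau ha hA hv
  classical
  rw [stmt4tau, dif_pos h]
  exact h.choose_spec

lemma stmt4tau_eq (ha : 0 < a)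
    (hA : ∀ t : ℝ, 0 ≤ t → ∀ v : V, ‖stmt4fl A t v‖ ≤ Real.exp (-a * t) * ‖v‖)
    {v : V} (hv : v ≠ 0) {t : ℝ} (ht : ‖stmt4fl A t v‖ = 1) : stmt4tau A v = t := by
  by_contra h
  rcases lt_or_gt_of_ne h with h' | h'
  · have := stmt4_norm_lt ha hA hv h'
    rw [ht, stmt4tau_spec ha hA hv] at this; exact lt_irrefl 1 this
  · have := stmt4_norm_lt ha hA hv h'
    rw [ht, stmt4tau_spec ha hA hv] at this; exact lt_irrefl 1 this

lemma stmt4tau_flow (ha : 0 < a)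
    (hA : ∀ t : ℝ, 0 ≤ t → ∀ v : V, ‖stmt4fl A t v‖ ≤ Real.exp (-a * t) * ‖v‖)
    {v : V} (hv : v ≠ 0) (s : ℝ) :
    stmt4tau A (stmt4fl A s v) = stmt4tau A v - s := by
  apply stmt4tau_eq ha hA (stmt4fl_ne_zero A s hv)
  rw [← stmt4fl_add, sub_add_cancel]
  exact stmt4tau_spec ha hA hv

lemma stmt4tau_neg (ha : 0 < a)
    (hA : ∀ t : ℝ, 0 ≤ t → ∀ v : V, ‖stmt4fl A t v‖ ≤ Real.exp (-a * t) * ‖v‖)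
    {v : V} (hv : v ≠ 0) (hv1 : ‖v‖ < 1) : stmt4tau A v < 0 := by
  by_contra h
  push_neg at h
  have h1 := stmt4_norm_le ha hA hv h
  rw [stmt4tau_spec ha hA hv, stmt4fl_zero] at h1
  linarith

lemma stmt4tau_le (ha : 0 < a)
    (hA : ∀ t : ℝ, 0 ≤ t → ∀ v : V, ‖stmt4fl A t v‖ ≤ Real.exp (-a * t) * ‖v‖)
    (hA0 : A ≠ 0) {v : V} (hv : v ≠ 0) (hv1 : ‖v‖ < 1) :
    stmt4tau A v ≤ Real.log ‖v‖ / ‖A‖ := by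
  have hAn : (0 : ℝ) < ‖A‖ := norm_pos_iff.mpr hA0
  have hv0 : (0 : ℝ) < ‖v‖ := norm_pos_iff.mpr hv
  set τ := stmt4tau A v with hτ
  have hτ0 : τ < 0 := stmt4tau_neg ha hA hv hv1
  have hb : (1 : ℝ) ≤ Real.exp (|τ| * ‖A‖) * ‖v‖ := by
    rw [← stmt4tau_spec ha hA hv]
    exact stmt4fl_norm_le_exp A τ v
  have h2 : ‖v‖⁻¹ ≤ Real.exp (|τ| * ‖A‖) := by
    rw [inv_le_iff_one_le_mul₀ hv0]  -- maybe wrong name, adjust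
    exact hb
  have h3 : Real.log ‖v‖⁻¹ ≤ |τ| * ‖A‖ := by
    calc Real.log ‖v‖⁻¹ ≤ Real.log (Real.exp (|τ| * ‖A‖)) :=
          Real.log_le_log (by positivity) h2
      _ = |τ| * ‖A‖ := Real.log_exp _
  rw [Real.log_inv, abs_of_neg hτ0] at h3
  rw [le_div_iff₀ hAn]
  nlinarith

open Classical in
/-- The conjugating map from the flow of `A` to the flow of `B`. -/
noncomputable def stmt4psi (A B : V →L[ℝ] V) (v : V) : V :=
  if v = 0 then 0 else stmt4fl B (-(stmt4tau A v)) (stmt4fl A (stmt4tau A v) v)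

lemma stmt4psi_zero (A B : V →L[ℝ] V) : stmt4psi A B (0 : V) = 0 := by
  simp [stmt4psi]

lemma stmt4psi_flow (ha : 0 < a)
    (hA : ∀ t : ℝ, 0 ≤ t → ∀ v : V, ‖stmt4fl A t v‖ ≤ Real.exp (-a * t) * ‖v‖)
    (t : ℝ) (v : V) :
    stmt4psi A B (stmt4fl A t v) = stmt4fl B t (stmt4psi A B v) := by
  classical
  by_cases hv : v = 0
  · rw [hv, stmt4fl_zero', stmt4psi_zero, stmt4fl_zero']
  · have h1 : stmt4fl A t v ≠ 0 := stmt4fl_ne_zero A t hv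
    rw [stmt4psi, if_neg h1, stmt4psi, if_neg hv, stmt4tau_flow ha hA hv t]
    set τ := stmt4tau A v with hτ
    have hL : stmt4fl A (τ - t) (stmt4fl A t v) = stmt4fl A τ v := by
      rw [← stmt4fl_add, sub_add_cancel]
    have hR : stmt4fl B t (stmt4fl B (-τ) (stmt4fl A τ v))
        = stmt4fl B (t - τ) (stmt4fl A τ v) := by
      rw [← stmt4fl_add, ← sub_eq_add_neg]
    rw [hL, hR, neg_sub]

lemma stmt4psi_inv (ha : 0 < a) (hb : 0 < b)
    (hA : ∀ t : ℝ, 0 ≤ t → ∀ v : V, ‖stmt4fl A t v‖ ≤ Real.exp (-a * t) * ‖v‖)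
    (hB : ∀ t : ℝ, 0 ≤ t → ∀ v : V, ‖stmt4fl B t v‖ ≤ Real.exp (-b * t) * ‖v‖)
    (v : V) : stmt4psi B A (stmt4psi A B v) = v := by
  classical
  by_cases hv : v = 0
  · rw [hv, stmt4psi_zero, stmt4psi_zero]
  · set τ := stmt4tau A v with hτ
    set u := stmt4fl A τ v with hu
    have hu1 : ‖u‖ = 1 := stmt4tau_spec ha hA hv
    have hune : u ≠ 0 := by intro h; rw [h, norm_zero] at hu1; norm_num at hu1
    have hψne : stmt4fl B (-τ) u ≠ 0 := stmt4fl_ne_zero B _ hune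
    have hψ : stmt4psi A B v = stmt4fl B (-τ) u := by
      rw [stmt4psi, if_neg hv]
    rw [hψ, stmt4psi, if_neg hψne]
    have hBτ : stmt4fl B τ (stmt4fl B (-τ) u) = u := by
      rw [← stmt4fl_add, add_neg_cancel, stmt4fl_zero]
    have hτB : stmt4tau B (stmt4fl B (-τ) u) = τ := by
      apply stmt4tau_eq hb hB hψne
      rw [hBτ, hu1]
    rw [hτB, hBτ, hu, stmt4fl_cancel]

lemma stmt4psi_norm_le (ha : 0 < a) (hb : 0 < b)
    (hA : ∀ t : ℝ, 0 ≤ t → ∀ v : V, ‖stmt4fl A t v‖ ≤ Real.exp (-a * t) * ‖v‖)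
    (hB : ∀ t : ℝ, 0 ≤ t → ∀ v : V, ‖stmt4fl B t v‖ ≤ Real.exp (-b * t) * ‖v‖)
    (hA0 : A ≠ 0) {v : V} (hv : v ≠ 0) (hv1 : ‖v‖ < 1) :
    ‖stmt4psi A B v‖ ≤ ‖v‖ ^ (b / ‖A‖) := by
  classical
  have hAn : (0 : ℝ) < ‖A‖ := norm_pos_iff.mpr hA0
  have hv0 : (0 : ℝ) < ‖v‖ := norm_pos_iff.mpr hv
  set τ := stmt4tau A v with hτdef
  have hτ0 : τ < 0 := stmt4tau_neg ha hA hv hv1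
  have hτle : τ ≤ Real.log ‖v‖ / ‖A‖ := stmt4tau_le ha hA hA0 hv hv1
  rw [stmt4psi, if_neg hv]
  have h1 := hB (-τ) (by linarith) (stmt4fl A τ v)
  rw [stmt4tau_spec ha hA hv, mul_one] at h1
  calc ‖stmt4fl B (-τ) (stmt4fl A τ v)‖ ≤ Real.exp (-b * -τ) := h1
    _ ≤ Real.exp (Real.log ‖v‖ * (b / ‖A‖)) := by
        rw [Real.exp_le_exp]
        rw [show Real.log ‖v‖ * (b / ‖A‖) = b * (Real.log ‖v‖ / ‖A‖) by ring]
        have : -b * -τ = b * τ := by ring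
        rw [this]
        exact mul_le_mul_of_nonneg_left hτle hb.le
    _ = ‖v‖ ^ (b / ‖A‖) := (Real.rpow_def_of_pos hv0 _).symm

lemma stmt4tau_continuousAt (ha : 0 < a)
    (hA : ∀ t : ℝ, 0 ≤ t → ∀ v : V, ‖stmt4fl A t v‖ ≤ Real.exp (-a * t) * ‖v‖)
    {v₀ : V} (hv : v₀ ≠ 0) : ContinuousAt (stmt4tau A) v₀ := by
  rw [ContinuousAt, Metric.tendsto_nhds]
  intro ε hε
  set τ₀ := stmt4tau A v₀ with hτ₀
  have hspec := stmt4tau_spec ha hA hv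
  have hlt1 : ‖stmt4fl A (τ₀ + ε) v₀‖ < 1 := by
    have := stmt4_norm_lt ha hA hv (show τ₀ < τ₀ + ε by linarith)
    rwa [hspec] at this
  have hgt1 : 1 < ‖stmt4fl A (τ₀ - ε) v₀‖ := by
    have := stmt4_norm_lt ha hA hv (show τ₀ - ε < τ₀ by linarith)
    rwa [hspec] at this
  have hc : ∀ t : ℝ, ContinuousAt (fun v : V => ‖stmt4fl A t v‖) v₀ := fun t =>
    (((stmt4fl_continuous A).comp
      (continuous_const.prodMk continuous_id : Continuous fun v : V => (t, v))).norm).continuousAt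
  have e1 : ∀ᶠ v in nhds v₀, ‖stmt4fl A (τ₀ + ε) v‖ < 1 :=
    (hc _).eventually_lt continuousAt_const hlt1
  have e2 : ∀ᶠ v in nhds v₀, 1 < ‖stmt4fl A (τ₀ - ε) v‖ :=
    continuousAt_const.eventually_lt (hc _) hgt1
  have e3 : ∀ᶠ v in nhds v₀, v ≠ 0 := eventually_ne_nhds hv
  filter_upwards [e1, e2, e3] with v h1 h2 h3
  rw [Real.dist_eq, abs_sub_lt_iff]
  have hs := stmt4tau_spec ha hA h3
  constructor
  · by_contra hcon
    push_neg at hcon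
    have := stmt4_norm_le ha hA h3 (show τ₀ + ε ≤ stmt4tau A v by linarith)
    rw [hs] at this; linarith
  · by_contra hcon
    push_neg at hcon
    have := stmt4_norm_le ha hA h3 (show stmt4tau A v ≤ τ₀ - ε by linarith)
    rw [hs] at this; linarith

lemma stmt4psi_continuous (ha : 0 < a) (hb : 0 < b)
    (hA : ∀ t : ℝ, 0 ≤ t → ∀ v : V, ‖stmt4fl A t v‖ ≤ Real.exp (-a * t) * ‖v‖)
    (hB : ∀ t : ℝ, 0 ≤ t → ∀ v : V, ‖stmt4fl B t v‖ ≤ Real.exp (-b * t) * ‖v‖)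
    (hA0 : A ≠ 0) : Continuous (stmt4psi A B) := by
  classical
  have hAn : (0 : ℝ) < ‖A‖ := norm_pos_iff.mpr hA0
  rw [continuous_iff_continuousAt]
  intro v₀
  by_cases hv : v₀ = 0
  · subst hv
    rw [ContinuousAt, stmt4psi_zero, Metric.tendsto_nhds]
    intro ε hε
    set ε' : ℝ := min ε 1 with hε'
    have hε'0 : 0 < ε' := lt_min hε one_pos
    set δ : ℝ := min (1/2) (ε' ^ (‖A‖ / b)) with hδ
    have hδ0 : 0 < δ := lt_min (by norm_num) (Real.rpow_pos_of_pos hε'0 _)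
    have hmem : Metric.ball (0 : V) δ ∈ nhds (0 : V) := Metric.ball_mem_nhds 0 hδ0
    filter_upwards [hmem] with v hvball
    rw [Metric.mem_ball, dist_zero_right] at hvball
    rw [dist_zero_right]
    by_cases hv0 : v = 0
    · rw [hv0, stmt4psi_zero, norm_zero]; exact hε
    · have hv1 : ‖v‖ < 1 := lt_of_lt_of_le (lt_of_lt_of_le hvball (min_le_left _ _)) (by norm_num)
      have hle := stmt4psi_norm_le ha hb hA hB hA0 hv0 hv1
      have hvδ : ‖v‖ < ε' ^ (‖A‖ / b) := lt_of_lt_of_le hvball (min_le_right _ _)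
      have hexp : (0 : ℝ) < b / ‖A‖ := by positivity
      have h2 : ‖v‖ ^ (b / ‖A‖) < (ε' ^ (‖A‖ / b)) ^ (b / ‖A‖) :=
        Real.rpow_lt_rpow (norm_nonneg v) hvδ hexp
      have h3 : (ε' ^ (‖A‖ / b)) ^ (b / ‖A‖) = ε' := by
        rw [← Real.rpow_mul hε'0.le]
        rw [show ‖A‖ / b * (b / ‖A‖) = 1 by field_simp, Real.rpow_one]
      calc ‖stmt4psi A B v‖ ≤ ‖v‖ ^ (b / ‖A‖) := hle
        _ < ε' := by rw [← h3]; exact h2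
        _ ≤ ε := min_le_left _ _
  · have hτc := stmt4tau_continuousAt ha hA hv
    have hG : Continuous fun p : ℝ × V => stmt4fl B (-p.1) (stmt4fl A p.1 p.2) := by
      have h1 : Continuous fun p : ℝ × V => stmt4fl A p.1 p.2 := stmt4fl_continuous A
      have h2 : Continuous fun p : ℝ × V => ((-p.1 : ℝ), stmt4fl A p.1 p.2) :=
        (continuous_fst.neg).prodMk h1
      have h3 := (stmt4fl_continuous B).comp h2
      exact h3
    have hca : ContinuousAt
        (fun v : V => stmt4fl B (-(stmt4tau A v)) (stmt4fl A (stmt4tau A v) v)) v₀ := by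
      have hpair : ContinuousAt (fun v : V => ((stmt4tau A v : ℝ), v)) v₀ :=
        hτc.prodMk continuousAt_id
      have h4 := (hG.continuousAt).comp hpair
      exact h4
    apply hca.congr
    filter_upwards [eventually_ne_nhds hv] with v h
    rw [stmt4psi, if_neg h]

end Stmt4Aux

/-- Two hyperbolic linear flows on a finite-dimensional real normed space are
topologically conjugate. -/
theorem stmt4 {V : Type*} [NormedAddCommGroup V] [NormedSpace ℝ V]
    [FiniteDimensional ℝ V]
    (A B : V →L[ℝ] V) (a b : ℝ) (ha : 0 < a) (hb : 0 < b)
    (hypA : ∀ t : ℝ, 0 ≤ t → ∀ v : V, ‖exp (t • A) v‖ ≤ Real.exp (-a * t) * ‖v‖)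
    (hypB : ∀ t : ℝ, 0 ≤ t → ∀ v : V, ‖exp (t • B) v‖ ≤ Real.exp (-b * t) * ‖v‖) :
    ∃ ψ : V ≃ₜ V, ∀ (t : ℝ) (v : V), ψ (exp (t • A) v) = exp (t • B) (ψ v) := by
  rcases subsingleton_or_nontrivial V with hV | hV
  · exact ⟨Homeomorph.refl V, fun t v => Subsingleton.elim _ _⟩
  · have hA' : ∀ t : ℝ, 0 ≤ t → ∀ v : V, ‖stmt4fl A t v‖ ≤ Real.exp (-a * t) * ‖v‖ := hypA
    have hB' : ∀ t : ℝ, 0 ≤ t → ∀ v : V, ‖stmt4fl B t v‖ ≤ Real.exp (-b * t) * ‖v‖ := hypB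
    have hA0 : A ≠ 0 := by
      intro h
      obtain ⟨v, hv⟩ := exists_ne (0 : V)
      have h1 := hypA 1 zero_le_one v
      rw [h, smul_zero, exp_zero, ContinuousLinearMap.one_apply] at h1
      have h2 : Real.exp (-a * 1) < 1 := by rw [Real.exp_lt_one_iff]; linarith
      have h3 : (0 : ℝ) < ‖v‖ := norm_pos_iff.mpr hv
      nlinarith
    have hB0 : B ≠ 0 := by
      intro h
      obtain ⟨v, hv⟩ := exists_ne (0 : V)
      have h1 := hypB 1 zero_le_one v
      rw [h, smul_zero, exp_zero, ContinuousLinearMap.one_apply] at h1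
      have h2 : Real.exp (-b * 1) < 1 := by rw [Real.exp_lt_one_iff]; linarith
      have h3 : (0 : ℝ) < ‖v‖ := norm_pos_iff.mpr hv
      nlinarith
    let ψe : V ≃ V :=
      { toFun := stmt4psi A B
        invFun := stmt4psi B A
        left_inv := fun v => stmt4psi_inv ha hb hA' hB' v
        right_inv := fun v => stmt4psi_inv hb ha hB' hA' v }
    let ψ : V ≃ₜ V :=
      { toEquiv := ψe
        continuous_toFun := stmt4psi_continuous ha hb hA' hB' hA0
        continuous_invFun := stmt4psi_continuous hb ha hB' hA' hB0 }
    refine ⟨ψ, fun t v => ?_⟩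
    show stmt4psi A B (stmt4fl A t v) = stmt4fl B t (stmt4psi A B v)
    exact stmt4psi_flow ha hA' t v
end

section
/- Let A be an n × n real matrix all of whose complex eigenvalues have negative real part. Then there exist constants C > 0 and a > 0 such that for all t ≥ 0 and all n × n real matrices X, ‖exp(tA) X‖ ≤ C exp(-a t) ‖X‖, where ‖·‖ is the operator norm on matrices. -/
open NormedSpace Matrix

open scoped Nat Matrix.Norms.L2Operator ENNReal NNReal

namespace Stmt7Aux

variable {n : ℕ}

lemma norm_one_le : ‖(1 : Matrix (Fin n) (Fin n) ℝ)‖ ≤ 1 := by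
  rw [Matrix.cstar_norm_def, _root_.map_one]
  exact ContinuousLinearMap.norm_id_le

lemma norm_pow_le_aux (x : Matrix (Fin n) (Fin n) ℝ) (k : ℕ) : ‖x ^ k‖ ≤ ‖x‖ ^ k := by
  rcases Nat.eq_zero_or_pos k with rfl | hk
  · simpa using norm_one_le
  · exact norm_pow_le' x hk

lemma norm_exp_le (x : Matrix (Fin n) (Fin n) ℝ) : ‖exp x‖ ≤ Real.exp ‖x‖ := by
  rw [exp_eq_tsum ℝ]
  refine (norm_tsum_le_tsum_norm (norm_expSeries_summable' x)).trans ?_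
  rw [Real.exp_eq_exp_ℝ, exp_eq_tsum ℝ]
  refine Summable.tsum_le_tsum (fun k => ?_) (norm_expSeries_summable' x)
    (expSeries_summable' (𝕂 := ℝ) ‖x‖)
  rw [norm_smul, smul_eq_mul]
  simp only [Real.norm_eq_abs]
  rw [abs_of_nonneg (by positivity)]
  gcongr
  exact norm_pow_le_aux x k

lemma exp_mulVec (B : Matrix (Fin n) (Fin n) ℂ) (v : Fin n → ℂ) (μ : ℂ)
    (hv : B *ᵥ v = μ • v) : exp B *ᵥ v = Complex.exp μ • v := by
  have hpow : ∀ k : ℕ, B ^ k *ᵥ v = μ ^ k • v := by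
    intro k
    induction k with
    | zero => simp [Matrix.one_mulVec]
    | succ k ih =>
      rw [pow_succ, ← Matrix.mulVec_mulVec, hv, Matrix.mulVec_smul, ih, smul_smul, ← pow_succ']
  let ℓ : Matrix (Fin n) (Fin n) ℂ →ₗ[ℂ] (Fin n → ℂ) :=
    { toFun := fun M => M *ᵥ v
      map_add' := fun M N => Matrix.add_mulVec M N v
      map_smul' := fun c M => Matrix.smul_mulVec c M v }
  let L := LinearMap.toContinuousLinearMap ℓ
  have hL : ∀ M, L M = M *ᵥ v := fun _ => rfl
  calc exp B *ᵥ v = L (exp B) := (hL _).symm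
    _ = L (∑' k : ℕ, (k !⁻¹ : ℂ) • B ^ k) := by rw [exp_eq_tsum ℂ]
    _ = ∑' k : ℕ, L ((k !⁻¹ : ℂ) • B ^ k) := L.map_tsum (expSeries_summable' (𝕂 := ℂ) B)
    _ = ∑' k : ℕ, ((k !⁻¹ : ℂ) * μ ^ k) • v := by
        refine tsum_congr fun k => ?_
        rw [_root_.map_smul, hL, hpow, smul_smul]
    _ = (∑' k : ℕ, (k !⁻¹ : ℂ) * μ ^ k) • v := by
        refine Summable.tsum_smul_const ?_ v
        simpa [smul_eq_mul] using expSeries_summable' (𝕂 := ℂ) μ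
    _ = Complex.exp μ • v := by
        rw [Complex.exp_eq_exp_ℂ, exp_eq_tsum ℂ]
        simp [smul_eq_mul]

lemma spec_exp (B : Matrix (Fin n) (Fin n) ℂ) {μ : ℂ} (hμ : μ ∈ spectrum ℂ (exp B)) :
    ∃ l ∈ spectrum ℂ B, μ = Complex.exp l := by
  classical
  set f : Module.End ℂ (Fin n → ℂ) := Matrix.toLinAlgEquiv' B with hf
  set g : Module.End ℂ (Fin n → ℂ) := Matrix.toLinAlgEquiv' (exp B) with hgdef
  have hg : Module.End.HasEigenvalue g μ := by
    rw [Module.End.hasEigenvalue_iff_mem_spectrum, hgdef, AlgEquiv.spectrum_eq]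
    exact hμ
  have hcomm : Commute B (exp B) := (Commute.refl B).exp_right
  have hfg : Commute f g := by
    unfold Commute SemiconjBy
    rw [hf, hgdef, ← _root_.map_mul, ← _root_.map_mul, hcomm.eq]
  have hstab : ∀ x ∈ Module.End.eigenspace g μ, f x ∈ Module.End.eigenspace g μ := by
    intro x hx
    rw [Module.End.mem_eigenspace_iff] at hx ⊢
    rw [← Module.End.mul_apply, ← hfg.eq, Module.End.mul_apply, hx, _root_.map_smul]
  haveI : Nontrivial (Module.End.eigenspace g μ) := by
    rw [Submodule.nontrivial_iff_ne_bot]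
    exact hg
  obtain ⟨l, hl⟩ := Module.End.exists_eigenvalue (f.restrict hstab)
  obtain ⟨u, hu⟩ := hl.exists_hasEigenvector
  have hu0 : (u : Fin n → ℂ) ≠ 0 := fun h => hu.2 (Subtype.ext h)
  have hfu : B *ᵥ (u : Fin n → ℂ) = l • (u : Fin n → ℂ) := by
    have h1 := congrArg Subtype.val hu.apply_eq_smul
    simpa [LinearMap.restrict_coe_apply, hf, Matrix.toLinAlgEquiv'_apply] using h1
  have hgu : exp B *ᵥ (u : Fin n → ℂ) = μ • (u : Fin n → ℂ) := by
    have hmem := u.2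
    rw [Module.End.mem_eigenspace_iff] at hmem
    simpa [hgdef, Matrix.toLinAlgEquiv'_apply] using hmem
  have hexp := exp_mulVec B (u : Fin n → ℂ) l hfu
  have hμl : μ = Complex.exp l := by
    by_contra hne
    apply hu0
    have heq : (μ - Complex.exp l) • (u : Fin n → ℂ) = 0 := by
      rw [sub_smul, ← hgu, hexp, sub_self]
    rcases smul_eq_zero.mp heq with h | h
    · exact absurd (sub_eq_zero.mp h) hne
    · exact h
  refine ⟨l, ?_, hμl⟩
  have hev : Module.End.HasEigenvalue f l :=
    Module.End.hasEigenvalue_of_hasEigenvector ⟨Module.End.mem_eigenspace_iff.mpr hfu, hu0⟩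
  have := hev.mem_spectrum
  rwa [hf, AlgEquiv.spectrum_eq] at this

lemma norm_real_le (M : Matrix (Fin n) (Fin n) ℝ) :
    ‖M‖ ≤ ‖M.map (Complex.ofReal ·)‖ := by
  rw [Matrix.cstar_norm_def]
  refine ContinuousLinearMap.opNorm_le_bound _ (norm_nonneg _) fun x => ?_
  set u : Fin n → ℝ := WithLp.equiv 2 _ x with hu
  have hx : x = (WithLp.equiv 2 _).symm u := rfl
  set uc : Fin n → ℂ := fun i => (u i : ℂ) with huc
  have key : M.map (Complex.ofReal ·) *ᵥ uc = fun i => (((M *ᵥ u) i : ℝ) : ℂ) := by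
    funext i
    simp only [Matrix.mulVec, dotProduct, Matrix.map_apply, huc]
    push_cast
    rfl
  have h2 : ‖Matrix.toEuclideanCLM (𝕜 := ℝ) M x‖ =
      ‖Matrix.toEuclideanCLM (𝕜 := ℂ) (M.map (Complex.ofReal ·)) ((WithLp.equiv 2 _).symm uc)‖ := by
    rw [hx, WithLp.equiv_symm_apply, WithLp.equiv_symm_apply, Matrix.toEuclideanCLM_toLp, Matrix.toEuclideanCLM_toLp]
    simp only [Matrix.toLin'_apply, key]
    rw [EuclideanSpace.norm_eq, EuclideanSpace.norm_eq]
    congr 1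
    refine Finset.sum_congr rfl fun i _ => ?_
    simp [Complex.norm_real]
  have h3 : ‖(WithLp.equiv 2 (Fin n → ℂ)).symm uc‖ = ‖x‖ := by
    rw [hx, EuclideanSpace.norm_eq, EuclideanSpace.norm_eq]
    congr 1
    refine Finset.sum_congr rfl fun i _ => ?_
    simp [huc, Complex.norm_real]
  rw [h2, Matrix.cstar_norm_def, ← h3]
  exact ContinuousLinearMap.le_opNorm _ _

lemma map_exp_ofReal (M : Matrix (Fin n) (Fin n) ℝ) :
    (exp M).map (Complex.ofReal ·) = exp (M.map (Complex.ofReal ·)) := by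
  have hφ : ∀ N : Matrix (Fin n) (Fin n) ℝ,
      (algebraMap ℝ ℂ).mapMatrix N = N.map (Complex.ofReal ·) := fun N => rfl
  have hcont : Continuous ((algebraMap ℝ ℂ).mapMatrix :
      Matrix (Fin n) (Fin n) ℝ →+* Matrix (Fin n) (Fin n) ℂ) := by
    have : ((algebraMap ℝ ℂ).mapMatrix :
        Matrix (Fin n) (Fin n) ℝ →+* Matrix (Fin n) (Fin n) ℂ).toFun =
        fun N => ((AlgHom.mapMatrix (Algebra.ofId ℝ ℂ) :
          Matrix (Fin n) (Fin n) ℝ →ₐ[ℝ] Matrix (Fin n) (Fin n) ℂ).toLinearMap N) := rfl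
    exact LinearMap.continuous_of_finiteDimensional
      (AlgHom.mapMatrix (Algebra.ofId ℝ ℂ)).toLinearMap
  have h1 := map_exp_of_mem_ball (𝕂 := ℝ) ((algebraMap ℝ ℂ).mapMatrix :
      Matrix (Fin n) (Fin n) ℝ →+* Matrix (Fin n) (Fin n) ℂ) hcont M
      ((expSeries_radius_eq_top ℝ (Matrix (Fin n) (Fin n) ℝ)).symm ▸ edist_lt_top _ _)
  rw [hφ, hφ] at h1
  rw [h1]

lemma exists_pow_lt (A : Matrix (Fin n) (Fin n) ℝ)
    (hA : ∀ μ ∈ spectrum ℂ (A.map (Complex.ofReal ·)), μ.re < 0) :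
    ∃ k : ℕ, 0 < k ∧ ‖exp A ^ k‖ < 1 := by
  set B := A.map (Complex.ofReal ·) with hB
  have hspec : ∀ μ ∈ spectrum ℂ (exp B), ‖μ‖₊ < 1 := by
    intro μ hμ
    obtain ⟨l, hl, rfl⟩ := spec_exp B hμ
    have hre : l.re < 0 := hA l hl
    have : ‖Complex.exp l‖ < 1 := by
      rw [Complex.norm_exp]
      exact Real.exp_lt_one_iff.mpr hre
    exact_mod_cast this
  have hρ : spectralRadius ℂ (exp B) < 1 := by
    rcases Set.eq_empty_or_nonempty (spectrum ℂ (exp B)) with he | hne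
    · rw [spectralRadius, he]
      simp
    · have := spectrum.spectralRadius_lt_of_forall_lt_of_nonempty hne (r := 1) hspec
      simpa using this
  have hgel := spectrum.pow_nnnorm_pow_one_div_tendsto_nhds_spectralRadius (exp B)
  have hev := hgel.eventually_lt_const hρ
  obtain ⟨k, hk1, hk⟩ := ((Filter.eventually_ge_atTop 1).and hev).exists
  refine ⟨k, hk1, ?_⟩
  have hlt : (‖exp B ^ k‖₊ : ℝ≥0∞) < 1 := by
    by_contra hge
    push_neg at hge
    have h1 := ENNReal.rpow_le_rpow hge (by positivity : (0:ℝ) ≤ 1 / k)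
    rw [ENNReal.one_rpow] at h1
    exact absurd (lt_of_le_of_lt h1 hk) (lt_irrefl _)
  have hnorm : ‖exp B ^ k‖ < 1 := by
    rw [ENNReal.coe_lt_one_iff] at hlt
    exact_mod_cast hlt
  calc ‖exp A ^ k‖ ≤ ‖(exp A ^ k).map (Complex.ofReal ·)‖ := norm_real_le _
    _ = ‖exp B ^ k‖ := by
        congr 1
        have : (exp A ^ k).map (Complex.ofReal ·) =
            ((algebraMap ℝ ℂ).mapMatrix (exp A)) ^ k := by
          rw [← map_pow]; rfl
        rw [this]
        have : ((algebraMap ℝ ℂ).mapMatrix (exp A) : Matrix (Fin n) (Fin n) ℂ) = exp B := by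
          rw [hB]; exact map_exp_ofReal A
        rw [this]
    _ < 1 := hnorm

lemma pow_mul_norm (P : Matrix (Fin n) (Fin n) ℝ) {r : ℝ} (hP : ‖P‖ ≤ r) (hr : 0 ≤ r) :
    ∀ (m : ℕ) (Y : Matrix (Fin n) (Fin n) ℝ), ‖P ^ m * Y‖ ≤ r ^ m * ‖Y‖ := by
  intro m
  induction m with
  | zero => intro Y; simp
  | succ m ih =>
    intro Y
    rw [pow_succ, mul_assoc]
    calc ‖P ^ m * (P * Y)‖ ≤ r ^ m * ‖P * Y‖ := ih _
      _ ≤ r ^ m * (r * ‖Y‖) := by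
          have h1 : ‖P * Y‖ ≤ r * ‖Y‖ :=
            (norm_mul_le _ _).trans (mul_le_mul_of_nonneg_right hP (norm_nonneg _))
          exact mul_le_mul_of_nonneg_left h1 (by positivity)
      _ = r ^ (m + 1) * ‖Y‖ := by ring


end Stmt7Aux

/-- Hurwitz stability of `A` gives an exponential decay estimate, in the operator norm
induced by the Euclidean norm, for the flow `X ↦ exp(tA) X` on matrices. -/
theorem stmt7 {n : ℕ} (A : Matrix (Fin n) (Fin n) ℝ)
    (hA : ∀ μ ∈ spectrum ℂ (A.map (Complex.ofReal ·)), μ.re < 0) :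
    ∃ C : ℝ, 0 < C ∧ ∃ a : ℝ, 0 < a ∧ ∀ t : ℝ, 0 ≤ t → ∀ X : Matrix (Fin n) (Fin n) ℝ,
      ‖Matrix.toEuclideanCLM (𝕜 := ℝ) (exp (t • A) * X)‖ ≤
        C * Real.exp (-a * t) * ‖Matrix.toEuclideanCLM (𝕜 := ℝ) X‖ := by
  simp only [← Matrix.cstar_norm_def]
  obtain ⟨k, hk0, hk⟩ := Stmt7Aux.exists_pow_lt A hA
  set P := exp A with hP
  set r : ℝ := max ‖P ^ k‖ 2⁻¹ with hrdef
  have hr0 : (0:ℝ) < r := lt_of_lt_of_le (by norm_num) (le_max_right _ _)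
  have hr1 : r < 1 := max_lt hk (by norm_num)
  have hlog : Real.log r < 0 := Real.log_neg hr0 hr1
  have hkR : (0:ℝ) < (k:ℝ) := Nat.cast_pos.mpr hk0
  set a : ℝ := -Real.log r / k with hadef
  have ha : 0 < a := div_pos (neg_pos.mpr hlog) hkR
  have hak : a * k = -Real.log r := by
    rw [hadef]; field_simp
  refine ⟨Real.exp (a * k) * Real.exp (k * ‖A‖), by positivity, a, ha, fun t ht X => ?_⟩
  set m : ℕ := ⌊t / k⌋₊ with hm
  set s : ℝ := t - m * k with hs
  have hs0 : 0 ≤ s := by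
    have h1 : (m:ℝ) ≤ t / k := Nat.floor_le (by positivity)
    have h2 : (m:ℝ) * k ≤ t := by
      rw [← div_mul_cancel₀ t (ne_of_gt hkR)]
      exact mul_le_mul_of_nonneg_right h1 hkR.le
    simpa [hs] using sub_nonneg.mpr h2
  have hsk : s ≤ k := by
    have h1 : t / k < m + 1 := Nat.lt_floor_add_one _
    have h2 : t < ((m:ℝ) + 1) * k := by
      rw [← div_mul_cancel₀ t (ne_of_gt hkR)]
      exact mul_lt_mul_of_pos_right h1 hkR
    rw [hs]
    nlinarith
  have hts : t = m * k + s := by rw [hs]; ring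
  -- decompose the exponential
  have hdecomp : exp (t • A) = (P ^ k) ^ m * exp (s • A) := by
    have h1 : t • A = ((m * k : ℝ)) • A + s • A := by
      rw [← add_smul, ← hts]
    have hcomm : Commute (((m * k : ℝ)) • A) (s • A) :=
      ((Commute.refl A).smul_left (m * k : ℝ)).smul_right s
    letI : NormedAlgebra ℚ (Matrix (Fin n) (Fin n) ℝ) := NormedAlgebra.restrictScalars ℚ ℝ _
    rw [h1, NormedSpace.exp_add_of_commute hcomm]
    congr 1
    have h2 : ((m * k : ℝ)) • A = ((m * k : ℕ) : ℝ) • A := by push_cast; ring_nf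
    rw [h2, Nat.cast_smul_eq_nsmul, NormedSpace.exp_nsmul, ← hP, pow_mul']
  have hsA : ‖exp (s • A)‖ ≤ Real.exp ((k:ℝ) * ‖A‖) := by
    refine (Stmt7Aux.norm_exp_le _).trans ?_
    apply Real.exp_le_exp.mpr
    rw [norm_smul, Real.norm_eq_abs, abs_of_nonneg hs0]
    exact mul_le_mul_of_nonneg_right hsk (norm_nonneg _)
  have hrm : r ^ m ≤ Real.exp (a * k) * Real.exp (-a * t) := by
    have h1 : r ^ m = Real.exp ((m:ℝ) * Real.log r) := by
      rw [← Real.exp_log hr0, ← Real.exp_nat_mul, Real.exp_log hr0]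
    rw [h1, ← Real.exp_add]
    apply Real.exp_le_exp.mpr
    have h2 : (m:ℝ) * Real.log r = -a * (m * k) := by
      linear_combination (m:ℝ) * hak
    rw [h2, hts]
    nlinarith [mul_le_mul_of_nonneg_left hsk ha.le]
  calc ‖exp (t • A) * X‖ = ‖(P ^ k) ^ m * (exp (s • A) * X)‖ := by
        rw [hdecomp, mul_assoc]
    _ ≤ r ^ m * ‖exp (s • A) * X‖ :=
        Stmt7Aux.pow_mul_norm _ (le_max_left _ _) hr0.le m _
    _ ≤ r ^ m * (Real.exp ((k:ℝ) * ‖A‖) * ‖X‖) := by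
        have h1 : ‖exp (s • A) * X‖ ≤ Real.exp ((k:ℝ) * ‖A‖) * ‖X‖ :=
          (norm_mul_le _ _).trans (mul_le_mul_of_nonneg_right hsA (norm_nonneg _))
        exact mul_le_mul_of_nonneg_left h1 (by positivity)
    _ ≤ (Real.exp (a * ↑k) * Real.exp (-a * t)) * (Real.exp ((k:ℝ) * ‖A‖) * ‖X‖) :=
        mul_le_mul_of_nonneg_right hrm (by positivity)
    _ = Real.exp (a * ↑k) * Real.exp ((k:ℝ) * ‖A‖) * Real.exp (-a * t) * ‖X‖ := by ring
end

section
/- Let A, B be real 2×2 matrices satisfying (a-d)² + bc ≤ 0 for their respective entries, and suppose tr(A) < 0 and tr(B) < 0. Then the flows X ↦ exp(tA) X and X ↦ exp(tB) X on GL(2,ℝ) are topologically conjugate. -/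
open NormedSpace Matrix
namespace Stmt11Aux
noncomputable section
abbrev M2 := Matrix (Fin 2) (Fin 2) ℝ
attribute [local instance] Matrix.linftyOpSemiNormedRing Matrix.linftyOpNormedRing
  Matrix.linftyOpNormedAlgebra

def entryLM (i j : Fin 2) : M2 →ₗ[ℝ] ℝ where
  toFun m := m i j
  map_add' _ _ := rfl
  map_smul' _ _ := rfl

def entryCLM (i j : Fin 2) : M2 →L[ℝ] ℝ := LinearMap.toContinuousLinearMap (entryLM i j)

lemma hasDerivAt_entry (C : M2) (t : ℝ) (i j : Fin 2) :
    HasDerivAt (fun u : ℝ => exp (u • C) i j) ((exp (t • C) * C) i j) t :=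
  (entryCLM i j).hasFDerivAt.comp_hasDerivAt t (hasDerivAt_exp_smul_const C t)

lemma hasDerivAt_det_exp (C : M2) (t : ℝ) :
    HasDerivAt (fun u : ℝ => (exp (u • C)).det) (C.trace * (exp (t • C)).det) t := by
  have h : ∀ i j, HasDerivAt (fun u : ℝ => exp (u • C) i j)
      ((exp (t • C) * C) i j) t := hasDerivAt_entry C t
  have hd := (((h 0 0).mul (h 1 1)).sub ((h 0 1).mul (h 1 0)))
  have h2 : HasDerivAt (fun u : ℝ => (exp (u • C)).det)
      ((exp (t • C) * C) 0 0 * exp (t • C) 1 1 + exp (t • C) 0 0 * (exp (t • C) * C) 1 1 -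
       ((exp (t • C) * C) 0 1 * exp (t • C) 1 0 + exp (t • C) 0 1 * (exp (t • C) * C) 1 0)) t := by
    refine HasDerivAt.congr_of_eventuallyEq hd (Filter.Eventually.of_forall fun u => ?_)
    simp [Matrix.det_fin_two]
  convert h2 using 1
  simp only [Matrix.mul_apply, Fin.sum_univ_two, Matrix.det_fin_two, Matrix.trace_fin_two]
  ring

lemma det_exp (C : M2) : (exp C).det = Real.exp C.trace := by
  set g : ℝ → ℝ := fun t => (exp (t • C)).det * Real.exp (-C.trace * t) with hg
  have hg' : ∀ t, HasDerivAt g 0 t := by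
    intro t
    have h1 := hasDerivAt_det_exp C t
    have h2 : HasDerivAt (fun t : ℝ => Real.exp (-C.trace * t))
        (Real.exp (-C.trace * t) * -C.trace) t := by
      have := (Real.hasDerivAt_exp (-C.trace * t)).comp t
        ((hasDerivAt_id t).const_mul (-C.trace))
      simpa [Function.comp_def, mul_comm] using this
    have h3 := h1.mul h2
    exact (h3.congr_of_eventuallyEq (Filter.Eventually.of_forall fun u => rfl)).congr_deriv (by ring)
  have hconst : g 1 = g 0 :=
    is_const_of_deriv_eq_zero (fun t => (hg' t).differentiableAt)
      (fun t => (hg' t).deriv) 1 0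
  have h0 : g 0 = 1 := by simp [hg, exp_zero]
  have h1 : g 1 = (exp C).det * Real.exp (-C.trace) := by simp [hg]
  rw [h1, h0] at hconst
  have h4 := congrArg (· * Real.exp C.trace) hconst
  simpa [mul_assoc, ← Real.exp_add] using h4

lemma det_exp_smul (t : ℝ) (C : M2) : (exp (t • C)).det = Real.exp (t * C.trace) := by
  rw [det_exp, Matrix.trace_smul, smul_eq_mul]

lemma exp_smul_add (s t : ℝ) (C : M2) :
    exp ((s + t) • C) = exp (s • C) * exp (t • C) := by
  rw [add_smul]
  exact Matrix.exp_add_of_commute _ _ (((Commute.refl C).smul_left s).smul_right t)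

lemma exp_smul_mul_neg (t : ℝ) (C : M2) : exp (t • C) * exp (-t • C) = 1 := by
  rw [← exp_smul_add]; simp [exp_zero]

lemma exp_smul_neg_mul (t : ℝ) (C : M2) : exp (-t • C) * exp (t • C) = 1 := by
  rw [← exp_smul_add]; simp [exp_zero]

/-- `exp (t • C)` as a unit. -/
def expu (t : ℝ) (C : M2) : M2ˣ :=
  ⟨exp (t • C), exp (-t • C), exp_smul_mul_neg t C, exp_smul_neg_mul t C⟩

lemma expu_inv (t : ℝ) (C : M2) : (expu t C)⁻¹ = expu (-t) C := Units.ext rfl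

/-- crossing time function -/
def tau (A : M2) (X : GL (Fin 2) ℝ) : ℝ := Real.log |(X : M2).det| / A.trace

lemma det_unit_ne (X : GL (Fin 2) ℝ) : (X : M2).det ≠ 0 :=
  ((Matrix.isUnit_iff_isUnit_det _).mp X.isUnit).ne_zero

lemma tau_continuous (A : M2) : Continuous (tau A) := by
  refine Continuous.div_const ?_ _
  refine continuous_iff_continuousAt.mpr fun X => ?_
  have hd : Continuous (fun X : GL (Fin 2) ℝ => |(X : M2).det|) :=
    (Continuous.matrix_det Units.continuous_val).abs
  exact (Real.continuousAt_log (by simpa using det_unit_ne X)).comp hd.continuousAt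

/-- the conjugating map -/
def cmap (A B : M2) (X : GL (Fin 2) ℝ) : GL (Fin 2) ℝ :=
  expu (tau A X) B * expu (-(tau A X)) A * X

lemma cmap_val (A B : M2) (X : GL (Fin 2) ℝ) :
    (cmap A B X : M2) = exp (tau A X • B) * exp (-(tau A X) • A) * (X : M2) := rfl

lemma cmap_inv_val (A B : M2) (X : GL (Fin 2) ℝ) :
    ((cmap A B X)⁻¹ : GL (Fin 2) ℝ).val =
      (X⁻¹ : GL (Fin 2) ℝ).val * (exp (tau A X • A) * exp (-(tau A X) • B)) := by
  have h : (cmap A B X)⁻¹ = X⁻¹ * (expu (tau A X) A * expu (-(tau A X)) B) := by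
    rw [cmap, _root_.mul_inv_rev, _root_.mul_inv_rev, expu_inv, expu_inv, neg_neg]
  rw [h, Units.val_mul, Units.val_mul]; rfl

lemma tau_cmap' (A B : M2) (hA : A.trace ≠ 0) (hB : B.trace ≠ 0) (X : GL (Fin 2) ℝ) :
    tau B (cmap A B X) = tau A X := by
  have hdet : (cmap A B X : M2).det =
      Real.exp (tau A X * B.trace) * Real.exp (-(tau A X) * A.trace) * (X : M2).det := by
    rw [cmap_val, Matrix.det_mul, Matrix.det_mul, det_exp_smul, det_exp_smul]
  have habs : |(cmap A B X : M2).det| =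
      Real.exp (tau A X * B.trace) * Real.exp (-(tau A X) * A.trace) * |(X : M2).det| := by
    rw [hdet, abs_mul, abs_mul, abs_of_pos (Real.exp_pos _), abs_of_pos (Real.exp_pos _)]
  have hlog : Real.log |(cmap A B X : M2).det| = tau A X * B.trace := by
    rw [habs, Real.log_mul (by positivity) (by simpa using det_unit_ne X),
      Real.log_mul (Real.exp_ne_zero _) (Real.exp_ne_zero _), Real.log_exp, Real.log_exp]
    have h2 : tau A X * A.trace = Real.log |(X : M2).det| := div_mul_cancel₀ _ hA
    rw [← h2]; ring
  rw [tau, hlog, mul_div_assoc, div_self hB, mul_one]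

lemma cmap_cmap (A B : M2) (hA : A.trace ≠ 0) (hB : B.trace ≠ 0) (X : GL (Fin 2) ℝ) :
    cmap B A (cmap A B X) = X := by
  apply Units.ext
  rw [cmap_val, tau_cmap' A B hA hB, cmap_val]
  have h1 : exp (-(tau A X) • B) * exp (tau A X • B) = 1 := by
    simpa using exp_smul_neg_mul (tau A X) B
  have h2 : exp (tau A X • A) * exp (-(tau A X) • A) = 1 := by
    simpa using exp_smul_mul_neg (tau A X) A
  calc exp (tau A X • A) * exp (-(tau A X) • B) *
        (exp (tau A X • B) * exp (-(tau A X) • A) * (X : M2))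
      = exp (tau A X • A) * ((exp (-(tau A X) • B) * exp (tau A X • B)) *
          (exp (-(tau A X) • A) * (X : M2))) := by simp only [mul_assoc]
    _ = exp (tau A X • A) * (exp (-(tau A X) • A) * (X : M2)) := by rw [h1, one_mul]
    _ = (exp (tau A X • A) * exp (-(tau A X) • A)) * (X : M2) := by rw [mul_assoc]
    _ = (X : M2) := by rw [h2, one_mul]

lemma cmap_continuous (A B : M2) : Continuous (cmap A B) := by
  have hv : Continuous fun X =>
      exp (tau A X • B) * exp (-(tau A X) • A) * ((X : GL (Fin 2) ℝ) : M2) :=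
    ((exp_continuous.comp ((tau_continuous A).smul continuous_const)).mul
      (exp_continuous.comp (((tau_continuous A).neg).smul continuous_const))).mul
      Units.continuous_val
  have hi : Continuous fun X : GL (Fin 2) ℝ => ((X⁻¹ : GL (Fin 2) ℝ) : M2) *
      (exp (tau A X • A) * exp (-(tau A X) • B)) :=
    Units.continuous_coe_inv.mul
      ((exp_continuous.comp ((tau_continuous A).smul continuous_const)).mul
        (exp_continuous.comp (((tau_continuous A).neg).smul continuous_const)))
  refine Units.continuous_iff.mpr ⟨?_, ?_⟩
  · simpa only [Function.comp_def, cmap_val] using hv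
  · have h : (fun X => (((cmap A B X)⁻¹ : GL (Fin 2) ℝ) : M2)) =
        (fun X : GL (Fin 2) ℝ => ((X⁻¹ : GL (Fin 2) ℝ) : M2) *
          (exp (tau A X • A) * exp (-(tau A X) • B))) := by
      funext X; exact cmap_inv_val A B X
    show Continuous fun X => (((cmap A B X)⁻¹ : GL (Fin 2) ℝ) : M2)
    rw [h]; exact hi

/-- time shift of tau along the flow -/
lemma tau_flow (A : M2) (hA : A.trace ≠ 0) (t : ℝ) (X Y : GL (Fin 2) ℝ)
    (h : (Y : M2) = exp (t • A) * (X : M2)) : tau A Y = t + tau A X := by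
  have hdet : (Y : M2).det = Real.exp (t * A.trace) * (X : M2).det := by
    rw [h, Matrix.det_mul, det_exp_smul]
  show Real.log |(Y : M2).det| / A.trace = t + tau A X
  rw [hdet, abs_mul, abs_of_pos (Real.exp_pos _),
    Real.log_mul (Real.exp_ne_zero _) (by simpa using det_unit_ne X), Real.log_exp, add_div,
    mul_div_cancel_right₀ t hA]
  rfl

/-- the conjugacy equation -/
lemma cmap_flow (A B : M2) (hA : A.trace ≠ 0) (t : ℝ) (X Y : GL (Fin 2) ℝ)
    (h : (Y : M2) = exp (t • A) * (X : M2)) :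
    (cmap A B Y : M2) = exp (t • B) * (cmap A B X : M2) := by
  rw [cmap_val, cmap_val, tau_flow A hA t X Y h, h, exp_smul_add t (tau A X) B,
    show -(t + tau A X) = -(tau A X) + -t by ring, exp_smul_add]
  have h1 : exp (-t • A) * exp (t • A) = 1 := exp_smul_neg_mul t A
  simp only [mul_assoc]
  rw [← mul_assoc (exp (-t • A)) (exp (t • A)), h1, one_mul]

/-- the conjugating homeomorphism -/
def chom (A B : M2) (hA : A.trace ≠ 0) (hB : B.trace ≠ 0) :
    GL (Fin 2) ℝ ≃ₜ GL (Fin 2) ℝ where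
  toFun := cmap A B
  invFun := cmap B A
  left_inv := cmap_cmap A B hA hB
  right_inv := cmap_cmap B A hB hA
  continuous_toFun := cmap_continuous A B
  continuous_invFun := cmap_continuous B A

end
end Stmt11Aux

/-- Two real 2×2 matrices satisfying `(a-d)² + bc ≤ 0` and having negative trace
generate topologically conjugate flows on `GL(2,ℝ)`. -/
theorem stmt11 (A B : Matrix (Fin 2) (Fin 2) ℝ)
    (hA : (A 0 0 - A 1 1) ^ 2 + A 0 1 * A 1 0 ≤ 0)
    (hB : (B 0 0 - B 1 1) ^ 2 + B 0 1 * B 1 0 ≤ 0)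
    (htrA : A.trace < 0) (htrB : B.trace < 0) :
    ∃ φ : GL (Fin 2) ℝ ≃ₜ GL (Fin 2) ℝ, ∀ (t : ℝ) (X Y : GL (Fin 2) ℝ),
      (Y : Matrix (Fin 2) (Fin 2) ℝ) = exp (t • A) * (X : Matrix (Fin 2) (Fin 2) ℝ) →
      (φ Y : Matrix (Fin 2) (Fin 2) ℝ) = exp (t • B) * (φ X : Matrix (Fin 2) (Fin 2) ℝ) := by
  exact ⟨Stmt11Aux.chom A B htrA.ne htrB.ne,
    fun t X Y h => Stmt11Aux.cmap_flow A B htrA.ne t X Y h⟩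
end

section
/- Let V be a real normed vector space and A a continuous linear operator such that ‖exp(tA) v‖ ≤ exp(-a t)‖v‖ for all t ≥ 0, some a > 0. If (vₙ) is a sequence in V \ {0} with vₙ → 0, then the crossing times tₙ = t_A(vₙ) (defined by ‖exp(tₙ A) vₙ‖ = 1) tend to -∞. -/
open NormedSpace Filter

lemma norm_exp_apply_le {V : Type*} [NormedAddCommGroup V] [NormedSpace ℝ V] [CompleteSpace V]
    (B : V →L[ℝ] V) (w : V) : ‖exp B w‖ ≤ Real.exp ‖B‖ * ‖w‖ := by
  have hs := expSeries_summable' (𝕂 := ℝ) B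
  have happ : exp B w = ∑' n : ℕ, ((n.factorial⁻¹ : ℝ) • B ^ n) w := by
    rw [exp_eq_tsum ℝ]
    exact (ContinuousLinearMap.apply ℝ V w).map_tsum hs
  have hpow : ∀ n : ℕ, ‖(B ^ n) w‖ ≤ ‖B‖ ^ n * ‖w‖ := by
    intro n
    induction n with
    | zero => simp
    | succ n ih =>
      rw [pow_succ', ContinuousLinearMap.mul_apply]
      calc ‖B ((B ^ n) w)‖ ≤ ‖B‖ * ‖(B ^ n) w‖ := B.le_opNorm _
        _ ≤ ‖B‖ * (‖B‖ ^ n * ‖w‖) := by gcongr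
        _ = ‖B‖ ^ (n + 1) * ‖w‖ := by ring
  have hb : ∀ n : ℕ, ‖((n.factorial⁻¹ : ℝ) • B ^ n) w‖ ≤ ‖B‖ ^ n / n.factorial * ‖w‖ := by
    intro n
    rw [ContinuousLinearMap.smul_apply, norm_smul, norm_inv, Real.norm_natCast]
    rw [div_eq_inv_mul, mul_assoc]
    gcongr
    exact hpow n
  have hsum : Summable fun n : ℕ => ‖B‖ ^ n / n.factorial * ‖w‖ :=
    (Real.summable_pow_div_factorial ‖B‖).mul_right _
  have hsum2 : Summable fun n : ℕ => ‖((n.factorial⁻¹ : ℝ) • B ^ n) w‖ :=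
    Summable.of_nonneg_of_le (fun n => norm_nonneg _) hb hsum
  rw [happ]
  calc ‖∑' n : ℕ, ((n.factorial⁻¹ : ℝ) • B ^ n) w‖ ≤ ∑' n : ℕ, ‖((n.factorial⁻¹ : ℝ) • B ^ n) w‖ :=
        norm_tsum_le_tsum_norm hsum2
    _ ≤ ∑' n : ℕ, ‖B‖ ^ n / n.factorial * ‖w‖ := Summable.tsum_le_tsum hb hsum2 hsum
    _ = (∑' n : ℕ, ‖B‖ ^ n / n.factorial) * ‖w‖ := tsum_mul_right
    _ = Real.exp ‖B‖ * ‖w‖ := by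
        rw [Real.exp_eq_exp_ℝ, exp_eq_tsum_div]

/-- If `vₙ` are nonzero vectors with `vₙ → 0`, then the unit-sphere crossing times
`t_A(vₙ)` tend to `-∞`. -/
theorem stmt17 {V : Type*} [NormedAddCommGroup V] [NormedSpace ℝ V] [CompleteSpace V]
    (A : V →L[ℝ] V) (a : ℝ) (ha : 0 < a)
    (hyp : ∀ t : ℝ, 0 ≤ t → ∀ v : V, ‖exp (t • A) v‖ ≤ Real.exp (-a * t) * ‖v‖)
    (tA : V → ℝ) (htA : ∀ v : V, v ≠ 0 → ‖exp (tA v • A) v‖ = 1)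
    (v : ℕ → V) (hv : ∀ k, v k ≠ 0) (hlim : Tendsto v atTop (nhds 0)) :
    Tendsto (fun k => tA (v k)) atTop atBot := by
  set C : ℝ := ‖A‖ + 1 with hCdef
  have hC : 0 < C := by positivity
  -- key pointwise bound
  have key : ∀ w : V, w ≠ 0 → ‖w‖ < 1 → tA w ≤ Real.log ‖w‖ / C := by
    intro w hw hw1
    have h1 := htA w hw
    have hwpos : 0 < ‖w‖ := norm_pos_iff.mpr hw
    have ht0 : tA w ≤ 0 := by
      by_contra h
      push_neg at h
      have h2 := hyp (tA w) h.le w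
      rw [h1] at h2
      have h3 : Real.exp (-a * tA w) ≤ 1 := by
        rw [Real.exp_le_one_iff]
        nlinarith
      nlinarith [norm_nonneg w]
    have h4 : (1 : ℝ) ≤ Real.exp (-(tA w) * C) * ‖w‖ := by
      rw [← h1]
      calc ‖exp (tA w • A) w‖ ≤ Real.exp ‖tA w • A‖ * ‖w‖ := norm_exp_apply_le _ _
        _ ≤ Real.exp (-(tA w) * C) * ‖w‖ := by
            gcongr
            refine le_trans (ContinuousLinearMap.opNorm_smul_le _ _) ?_
            rw [Real.norm_eq_abs, abs_of_nonpos ht0]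
            have h0 : (0:ℝ) ≤ -(tA w) := by linarith
            nlinarith [norm_nonneg A]
    have h5 : Real.exp (tA w * C) ≤ ‖w‖ := by
      have he : Real.exp (-(tA w) * C) = (Real.exp (tA w * C))⁻¹ := by
        rw [← Real.exp_neg]; ring_nf
      rw [he] at h4
      have hp := Real.exp_pos (tA w * C)
      have := mul_inv_cancel₀ hp.ne'
      nlinarith
    have h6 : tA w * C ≤ Real.log ‖w‖ := (Real.le_log_iff_exp_le hwpos).mpr h5
    exact (le_div_iff₀ hC).mpr h6
  -- the comparison sequence tends to -∞
  have hnorm : Tendsto (fun k => ‖v k‖) atTop (nhds 0) := by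
    simpa using hlim.norm
  have hnorm' : Tendsto (fun k => ‖v k‖) atTop (nhdsWithin 0 (Set.Ioi 0)) := by
    apply tendsto_nhdsWithin_of_tendsto_nhds_of_eventually_within _ hnorm
    exact Eventually.of_forall fun k => norm_pos_iff.mpr (hv k)
  have hlog : Tendsto (fun k => Real.log ‖v k‖ / C) atTop atBot :=
    (Real.tendsto_log_nhdsGT_zero.comp hnorm').atBot_div_const hC
  refine tendsto_atBot_mono' atTop ?_ hlog
  have hev : ∀ᶠ k in atTop, ‖v k‖ < 1 := hnorm.eventually_lt_const one_pos
  filter_upwards [hev] with k hk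
  exact key (v k) (hv k) hk
end

section
/- Let V be a real normed vector space and A, B hyperbolic continuous linear operators with constants a, b > 0 (‖exp(tA)v‖ ≤ exp(-at)‖v‖ and ‖exp(tB)v‖ ≤ exp(-bt)‖v‖ for t ≥ 0). Define ψ : V → V by ψ(0) = 0 and, for v ≠ 0, ψ(v) = exp(-t_A(v) B) · h₀(exp(t_A(v) A) v), where t_A(v) is the unit-sphere crossing time for A and h₀(w) = w/‖w‖. Then ψ is continuous at 0. -/
open NormedSpace

/-- Norm bound for the exponential of a continuous linear map. -/
lemma stmt19_norm_exp_le {V : Type*} [NormedAddCommGroup V] [NormedSpace ℝ V]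
    [CompleteSpace V] (x : V →L[ℝ] V) : ‖exp x‖ ≤ Real.exp ‖x‖ := by
  rw [exp_eq_tsum ℝ]
  have hsum := norm_expSeries_summable' (𝕂 := ℝ) x
  have hterm : ∀ n : ℕ, ‖((n.factorial : ℝ))⁻¹ • x ^ n‖ ≤ ‖x‖ ^ n / (n.factorial : ℝ) := by
    intro n
    have hx : ‖x ^ n‖ ≤ ‖x‖ ^ n := by
      rcases Nat.eq_zero_or_pos n with h | h
      · subst h
        simpa [ContinuousLinearMap.one_def] using
          (ContinuousLinearMap.norm_id_le : ‖ContinuousLinearMap.id ℝ V‖ ≤ 1)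
      · exact norm_pow_le' x h
    rw [show ‖((n.factorial : ℝ))⁻¹ • x ^ n‖ = ‖((n.factorial : ℝ))⁻¹‖ * ‖x ^ n‖ from
      norm_smul ((n.factorial : ℝ))⁻¹ (x ^ n), norm_inv, Real.norm_natCast, div_eq_inv_mul]
    gcongr
  calc ‖∑' n : ℕ, ((n.factorial : ℝ))⁻¹ • x ^ n‖ ≤ ∑' n : ℕ, ‖((n.factorial : ℝ))⁻¹ • x ^ n‖ :=
        norm_tsum_le_tsum_norm hsum
    _ ≤ ∑' n : ℕ, ‖x‖ ^ n / (n.factorial : ℝ) :=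
        Summable.tsum_le_tsum hterm hsum (Real.summable_pow_div_factorial _)
    _ = Real.exp ‖x‖ := by
        rw [Real.exp_eq_exp_ℝ, exp_eq_tsum_div]

/-- The conjugating map `ψ`, defined by `ψ(0) = 0` and
`ψ(v) = exp(-t_A(v) B) h₀(exp(t_A(v) A) v)` for `v ≠ 0`, is continuous at `0`. -/
theorem stmt19 {V : Type*} [NormedAddCommGroup V] [NormedSpace ℝ V] [CompleteSpace V]
    (A B : V →L[ℝ] V) (a b : ℝ) (ha : 0 < a) (hb : 0 < b)
    (hypA : ∀ t : ℝ, 0 ≤ t → ∀ v : V, ‖exp (t • A) v‖ ≤ Real.exp (-a * t) * ‖v‖)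
    (hypB : ∀ t : ℝ, 0 ≤ t → ∀ v : V, ‖exp (t • B) v‖ ≤ Real.exp (-b * t) * ‖v‖)
    (tA : V → ℝ) (htA : ∀ v : V, v ≠ 0 → ‖exp (tA v • A) v‖ = 1)
    (ψ : V → V) (hψ0 : ψ 0 = 0)
    (hψ : ∀ v : V, v ≠ 0 →
      ψ v = exp ((-tA v) • B) (‖exp (tA v • A) v‖⁻¹ • exp (tA v • A) v)) :
    ContinuousAt ψ 0 := by
  rcases subsingleton_or_nontrivial V with hV | hV
  · have hconst : ψ = fun _ => (0 : V) := funext fun v => by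
      rw [Subsingleton.elim v 0, hψ0]
    rw [hconst]; exact continuousAt_const
  -- `A ≠ 0`, since otherwise `hypA` fails for nonzero vectors
  obtain ⟨v0, hv0⟩ := exists_ne (0 : V)
  have hA : A ≠ 0 := by
    intro h
    have h1 := hypA 1 zero_le_one v0
    rw [h, smul_zero, exp_zero] at h1
    simp only [ContinuousLinearMap.one_apply, mul_one] at h1
    have h2 : Real.exp (-a) < 1 := by
      rw [Real.exp_lt_one_iff]; nlinarith
    have h3 : 0 < ‖v0‖ := norm_pos_iff.mpr hv0
    nlinarith
  have hAnorm : (0 : ℝ) < ‖A‖ := norm_pos_iff.mpr hA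
  set c : ℝ := b / ‖A‖ with hc
  have hcpos : 0 < c := div_pos hb hAnorm
  -- key estimate : `‖ψ v‖ ≤ ‖v‖ ^ c` for `‖v‖ < 1`
  have key : ∀ v : V, ‖v‖ < 1 → ‖ψ v‖ ≤ ‖v‖ ^ c := by
    intro v hv
    rcases eq_or_ne v 0 with rfl | hvne
    · simp [hψ0, Real.zero_rpow hcpos.ne']
    have hvpos : 0 < ‖v‖ := norm_pos_iff.mpr hvne
    set t : ℝ := tA v with htdef
    have h1 : ‖exp (t • A) v‖ = 1 := htA v hvne
    -- `t < 0`
    have htneg : t < 0 := by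
      by_contra h
      push_neg at h
      have h2 := hypA t h v
      rw [h1] at h2
      have h3 : Real.exp (-a * t) ≤ 1 := by
        rw [Real.exp_le_one_iff]; nlinarith
      nlinarith [norm_nonneg v]
    -- `t ≤ log ‖v‖ / ‖A‖`
    have hub : t ≤ Real.log ‖v‖ / ‖A‖ := by
      have hbound : (1 : ℝ) ≤ Real.exp (-t * ‖A‖) * ‖v‖ := by
        calc (1 : ℝ) = ‖exp (t • A) v‖ := h1.symm
          _ ≤ ‖exp (t • A)‖ * ‖v‖ := ContinuousLinearMap.le_opNorm _ v
          _ ≤ Real.exp ‖t • A‖ * ‖v‖ :=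
              mul_le_mul_of_nonneg_right (stmt19_norm_exp_le _) (norm_nonneg v)
          _ = Real.exp (-t * ‖A‖) * ‖v‖ := by
              rw [show ‖t • A‖ = ‖t‖ * ‖A‖ from norm_smul t A, Real.norm_eq_abs,
                abs_of_neg htneg]
      have h3 : Real.exp (t * ‖A‖) ≤ ‖v‖ := by
        have h4 : Real.exp (-t * ‖A‖) = (Real.exp (t * ‖A‖))⁻¹ := by
          rw [neg_mul, Real.exp_neg]
        rw [h4] at hbound
        have h5 : 0 < Real.exp (t * ‖A‖) := Real.exp_pos _
        nlinarith [mul_inv_cancel₀ h5.ne']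
      have h6 : t * ‖A‖ ≤ Real.log ‖v‖ := (Real.le_log_iff_exp_le hvpos).mpr h3
      exact (le_div_iff₀ hAnorm).mpr h6
    -- bound `‖ψ v‖`
    rw [hψ v hvne, h1, inv_one, one_smul]
    have h7 := hypB (-t) (by linarith) (exp (t • A) v)
    rw [h1, mul_one] at h7
    calc ‖exp ((-t) • B) (exp (t • A) v)‖ ≤ Real.exp (-b * -t) := h7
      _ = Real.exp (b * t) := by ring_nf
      _ ≤ Real.exp (b * (Real.log ‖v‖ / ‖A‖)) := by
          apply Real.exp_le_exp.mpr
          exact mul_le_mul_of_nonneg_left hub hb.le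
      _ = ‖v‖ ^ c := by
          rw [Real.rpow_def_of_pos hvpos, hc]
          ring_nf
  -- conclude by squeezing
  rw [ContinuousAt, hψ0]
  have hg : Filter.Tendsto (fun v : V => ‖v‖ ^ c) (nhds 0) (nhds 0) := by
    have h8 : Filter.Tendsto (fun v : V => ‖v‖) (nhds 0) (nhds 0) := tendsto_norm_zero
    have h9 : ContinuousAt (fun x : ℝ => x ^ c) 0 :=
      Real.continuousAt_rpow_const 0 c (Or.inr hcpos.le)
    have h10 := h9.tendsto.comp h8
    rwa [Real.zero_rpow hcpos.ne'] at h10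
  apply squeeze_zero_norm' _ hg
  filter_upwards [Metric.ball_mem_nhds (0 : V) one_pos] with v hv
  exact key v (by simpa [dist_eq_norm] using hv)
end
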